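/- Let Q_1, Q_2 be binary quadratic forms over a field k of characteristic not 2. Then 16·Res(Q_1, Q_2) = Disc_{x_1,x_2}( Disc_{u,v}( x_1 Q_2(u,v) − x_2 Q_1(u,v) ) ), where the inner discriminant is taken of x_1Q_2 − x_2Q_1 viewed as a quadratic form in (u,v), yielding a quadratic form in (x_1, x_2), and the outer discriminant is taken in (x_1, x_2). -/

import Mathlib

open MvPolynomial

/-- The resultant of two binary quadratics `a2 u² + a1 uv + a0 v²` and
`b2 u² + b1 uv + b0 v²`: the determinant of the 4×4 Sylvester matrix. -/
noncomputable def res2 {k : Type*} [CommRing k] (a2 a1 a0 b2 b1 b0 : k) : k :=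
  Matrix.det !![a2, a1, a0, 0; 0, a2, a1, a0; b2, b1, b0, 0; 0, b2, b1, b0]

/-- The discriminant `b² − 4ac` of a binary quadratic form `a u² + b uv + c v²`. -/
def disc2 {k : Type*} [CommRing k] (a b c : k) : k := b ^ 2 - 4 * a * c

/-- For binary quadratics `Q_1 = a2 u² + a1 uv + a0 v²` and `Q_2 = b2 u² + b1 uv + b0 v²`
over a field of characteristic not 2:
`16·Res(Q_1,Q_2) = Disc_{x_1,x_2}(Disc_{u,v}(x_1 Q_2 − x_2 Q_1))`, where the inner
discriminant of `x_1 Q_2 − x_2 Q_1` (a quadratic form in `(u,v)`) is a quadratic form `D`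
in `(x_1, x_2)` and the outer discriminant is taken in `(x_1, x_2)`. -/
theorem sixteen_res2_eq_double_disc {k : Type*} [Field k] (hchar : (2 : k) ≠ 0)
    (a2 a1 a0 b2 b1 b0 : k) :
    letI D : MvPolynomial (Fin 2) k :=
      (X 0 * C b1 - X 1 * C a1) ^ 2 - 4 * (X 0 * C b2 - X 1 * C a2) * (X 0 * C b0 - X 1 * C a0)
    16 * res2 a2 a1 a0 b2 b1 b0 =
      disc2 (MvPolynomial.coeff (Finsupp.single (0 : Fin 2) 2) D)
        (MvPolynomial.coeff (Finsupp.single (0 : Fin 2) 1 + Finsupp.single (1 : Fin 2) 1) D)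
        (MvPolynomial.coeff (Finsupp.single (1 : Fin 2) 2) D) := by
  have hD : ((X 0 * C b1 - X 1 * C a1) ^ 2
      - 4 * (X 0 * C b2 - X 1 * C a2) * (X 0 * C b0 - X 1 * C a0) : MvPolynomial (Fin 2) k) = C (b1^2 - 4*b2*b0) * monomial (Finsupp.single (0:Fin 2) 2) 1
      + C (4*b2*a0 + 4*a2*b0 - 2*b1*a1)
          * monomial (Finsupp.single (0:Fin 2) 1 + Finsupp.single (1:Fin 2) 1) 1
      + C (a1^2 - 4*a2*a0) * monomial (Finsupp.single (1:Fin 2) 2) 1 := by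
    have h0 : (monomial (Finsupp.single (0:Fin 2) 2) (1:k)) = X 0 ^ 2 := by
      simp [X_pow_eq_monomial]
    have h1 : (monomial (Finsupp.single (0:Fin 2) 1 + Finsupp.single (1:Fin 2) 1) (1:k))
        = X 0 * X 1 := by
      rw [X, X, monomial_mul, one_mul]
    have h2 : (monomial (Finsupp.single (1:Fin 2) 2) (1:k)) = X 1 ^ 2 := by
      simp [X_pow_eq_monomial]
    rw [h0, h1, h2]
    simp only [map_sub, map_mul, map_add, map_pow, map_ofNat]
    ring
  have ne1 : ¬ (Finsupp.single (0:Fin 2) 1 + Finsupp.single (1:Fin 2) 1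
      = Finsupp.single (0:Fin 2) 2) := by
    simp [Finsupp.ext_iff, Fin.forall_fin_two]
  have ne2 : ¬ (Finsupp.single (1:Fin 2) 2 = Finsupp.single (0:Fin 2) 2) := by
    simp [Finsupp.ext_iff, Fin.forall_fin_two]
  have ne3 : ¬ (Finsupp.single (0:Fin 2) 2
      = Finsupp.single (0:Fin 2) 1 + Finsupp.single (1:Fin 2) 1) := by
    simp [Finsupp.ext_iff, Fin.forall_fin_two]
  have ne4 : ¬ (Finsupp.single (1:Fin 2) 2
      = Finsupp.single (0:Fin 2) 1 + Finsupp.single (1:Fin 2) 1) := by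
    simp [Finsupp.ext_iff, Fin.forall_fin_two]
  have ne5 : ¬ (Finsupp.single (0:Fin 2) 2 = Finsupp.single (1:Fin 2) 2) := by
    simp [Finsupp.ext_iff, Fin.forall_fin_two]
  have ne6 : ¬ (Finsupp.single (0:Fin 2) 1 + Finsupp.single (1:Fin 2) 1
      = Finsupp.single (1:Fin 2) 2) := by
    simp [Finsupp.ext_iff, Fin.forall_fin_two]
  rw [hD]
  simp only [coeff_add, coeff_C_mul, coeff_monomial, if_pos rfl,
    if_neg ne1, if_neg ne2, if_neg ne3, if_neg ne4, if_neg ne5, if_neg ne6]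
  rw [res2, disc2, show (16:k) = 2^4 by norm_num]
  simp [Matrix.det_succ_row_zero, Fin.sum_univ_succ, Fin.succAbove]
  ring
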